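/- arXiv:2004.01865 — 2 statements merged into one kernel-verified Lean document; each statement's English description precedes it below -/
import Mathlib

section
/- Let K : ℝ → ℝ be integrable with ∫ K(u) du = 1, and define L(t) = (∫_t^∞ K(u) du) · 1_{t>0} − (∫_{−∞}^t K(u) du) · 1_{t≤0}. Then ∫ L(t)² dt = ∬_{xy ≥ 0} K(x) K(y) (|x| ∧ |y|) dx dy, provided both sides are finite. -/
open MeasureTheory Set

namespace Stmt0Aux

/-- The time-set on which both indicators are 1. -/
def T (x y : ℝ) : Set ℝ := Ioo 0 (min x y) ∪ Icc (max x y) 0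

lemma measurableSet_T (x y : ℝ) : MeasurableSet (T x y) :=
  measurableSet_Ioo.union measurableSet_Icc

lemma volume_T_lt_top (x y : ℝ) : volume (T x y) < ⊤ :=
  lt_of_le_of_lt (measure_union_le _ _)
    (ENNReal.add_lt_top.2 ⟨measure_Ioo_lt_top, measure_Icc_lt_top⟩)

lemma key (x y : ℝ) :
    max (min x y) 0 + max (-(max x y)) 0 = if 0 ≤ x * y then min |x| |y| else 0 := by
  simp only [min_def, max_def, abs]
  split_ifs <;> first | linarith | nlinarith

lemma volume_T (x y : ℝ) :
    (volume (T x y)).toReal = if 0 ≤ x * y then min |x| |y| else 0 := by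
  have hd : Disjoint (Ioo 0 (min x y)) (Icc (max x y) 0) := by
    rw [Set.disjoint_left]
    rintro t ⟨h1, _⟩ ⟨_, h4⟩
    linarith
  rw [T, measure_union hd measurableSet_Icc, Real.volume_Ioo, Real.volume_Icc,
    ENNReal.toReal_add ENNReal.ofReal_ne_top ENNReal.ofReal_ne_top,
    ENNReal.toReal_ofReal', ENNReal.toReal_ofReal', sub_zero, zero_sub, key]

noncomputable def f (K : ℝ → ℝ) (t x : ℝ) : ℝ :=
  if 0 < t then (if t < x then K x else 0) else (if x ≤ t then K x else 0)

lemma f_eq_indicator (K : ℝ → ℝ) (t : ℝ) :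
    (fun x => f K t x) = (if 0 < t then Ioi t else Iic t).indicator K := by
  funext x
  by_cases ht : 0 < t <;>
    simp [f, ht, Set.indicator_apply, mem_Ioi, mem_Iic]

lemma f_mul_eq (K : ℝ → ℝ) (t x y : ℝ) :
    f K t x * f K t y = K x * K y * (T x y).indicator 1 t := by
  by_cases ht : 0 < t
  · have ht' : ¬ t ≤ 0 := not_le.2 ht
    simp only [f, T, if_pos ht, Set.indicator_apply, mem_union, mem_Ioo, mem_Icc, lt_min_iff,
      max_le_iff, ht, ht', true_and, and_false, or_false, Pi.one_apply]
    split_ifs <;> first | ring1 | tauto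
  · have ht' : t ≤ 0 := not_lt.1 ht
    simp only [f, T, if_neg ht, Set.indicator_apply, mem_union, mem_Ioo, mem_Icc, lt_min_iff,
      max_le_iff, ht, ht', false_and, false_or, and_true, Pi.one_apply]
    split_ifs <;> first | ring1 | tauto

lemma integral_f_mul (K : ℝ → ℝ) (x y : ℝ) :
    ∫ t, f K t x * f K t y
      = if 0 ≤ x * y then K x * K y * min |x| |y| else 0 := by
  have h1 : (fun t => f K t x * f K t y)
      = fun t => K x * K y * (T x y).indicator 1 t := funext fun t => f_mul_eq K t x y
  rw [h1, integral_const_mul _ _, integral_indicator_one (measurableSet_T x y), measureReal_def, volume_T]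
  split_ifs <;> ring1

lemma integrable_slice (K : ℝ → ℝ) (x y : ℝ) :
    Integrable (fun t => f K t x * f K t y) := by
  have h1 : (fun t => f K t x * f K t y)
      = fun t => K x * K y * (T x y).indicator 1 t := funext fun t => f_mul_eq K t x y
  rw [h1]
  exact (((integrable_indicator_iff (measurableSet_T x y)).2
    (integrableOn_const (volume_T_lt_top x y).ne))).const_mul _

lemma integral_norm_slice (K : ℝ → ℝ) (x y : ℝ) :
    (∫ t, ‖f K t x * f K t y‖)
      = ‖if 0 ≤ x * y then K x * K y * min |x| |y| else 0‖ := by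
  have h1 : (fun t => ‖f K t x * f K t y‖)
      = fun t => ‖K x * K y‖ * (T x y).indicator 1 t := by
    funext t
    rw [f_mul_eq, norm_mul]
    congr 1
    exact Real.norm_of_nonneg (Set.indicator_nonneg (fun _ _ => zero_le_one) t)
  rw [h1, integral_const_mul _ _, integral_indicator_one (measurableSet_T x y), measureReal_def]
  have h2 : (0:ℝ) ≤ (volume (T x y)).toReal := ENNReal.toReal_nonneg
  rw [show (if 0 ≤ x * y then K x * K y * min |x| |y| else 0)
      = K x * K y * (volume (T x y)).toReal by rw [volume_T]; split_ifs <;> ring1]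
  simp [norm_mul, Real.norm_of_nonneg h2, mul_assoc]

theorem aux (K : ℝ → ℝ) (hKm : Measurable K) (hK : Integrable K)
    (L : ℝ → ℝ)
    (hL : ∀ t, L t = if 0 < t then ∫ u in Ioi t, K u else -∫ u in Iic t, K u)
    (hKKint : Integrable (fun p : ℝ × ℝ =>
      if 0 ≤ p.1 * p.2 then K p.1 * K p.2 * min |p.1| |p.2| else 0)) :
    ∫ t, (L t) ^ 2
      = ∫ p : ℝ × ℝ, (if 0 ≤ p.1 * p.2 then K p.1 * K p.2 * min |p.1| |p.2| else 0) := by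
  -- joint measurability of the kernel on (ℝ × ℝ) × ℝ
  have m1 : Measurable fun q : (ℝ × ℝ) × ℝ => f K q.2 q.1.1 := by
    unfold f
    refine Measurable.ite (measurableSet_lt measurable_const measurable_snd) ?_ ?_
    · exact Measurable.ite (measurableSet_lt measurable_snd measurable_fst.fst)
        (hKm.comp measurable_fst.fst) measurable_const
    · exact Measurable.ite (measurableSet_le measurable_fst.fst measurable_snd)
        (hKm.comp measurable_fst.fst) measurable_const
  have m2 : Measurable fun q : (ℝ × ℝ) × ℝ => f K q.2 q.1.2 := by
    unfold f
    refine Measurable.ite (measurableSet_lt measurable_const measurable_snd) ?_ ?_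
    · exact Measurable.ite (measurableSet_lt measurable_snd measurable_fst.snd)
        (hKm.comp measurable_fst.snd) measurable_const
    · exact Measurable.ite (measurableSet_le measurable_fst.snd measurable_snd)
        (hKm.comp measurable_fst.snd) measurable_const
  have hHm : Measurable fun q : (ℝ × ℝ) × ℝ => f K q.2 q.1.1 * f K q.2 q.1.2 := m1.mul m2
  -- integrability on the product
  have hH_int : Integrable (fun q : (ℝ × ℝ) × ℝ => f K q.2 q.1.1 * f K q.2 q.1.2)
      ((volume : Measure (ℝ × ℝ)).prod (volume : Measure ℝ)) := by
    rw [show ((volume : Measure (ℝ × ℝ)).prod (volume : Measure ℝ))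
        = (volume : Measure ((ℝ × ℝ) × ℝ)) from (Measure.volume_eq_prod _ _).symm] at *
    refine (integrable_prod_iff ?_).2 ⟨?_, ?_⟩
    · rw [Measure.volume_eq_prod]
      exact hHm.aestronglyMeasurable
    · exact Filter.Eventually.of_forall fun p => integrable_slice K p.1 p.2
    · have : (fun p : ℝ × ℝ => ∫ t, ‖f K t p.1 * f K t p.2‖)
          = fun p : ℝ × ℝ =>
            ‖if 0 ≤ p.1 * p.2 then K p.1 * K p.2 * min |p.1| |p.2| else 0‖ :=
        funext fun p => integral_norm_slice K p.1 p.2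
      rw [this]
      exact hKKint.norm
  -- the inner integral in t
  have hInner : ∀ p : ℝ × ℝ, (∫ t, f K t p.1 * f K t p.2)
      = if 0 ≤ p.1 * p.2 then K p.1 * K p.2 * min |p.1| |p.2| else 0 :=
    fun p => integral_f_mul K p.1 p.2
  -- the inner integral in p
  have hOuter : ∀ t : ℝ, (∫ p : ℝ × ℝ, f K t p.1 * f K t p.2) = (L t) ^ 2 := by
    intro t
    rw [Measure.volume_eq_prod, integral_prod_mul (f K t) (f K t)]
    have h1 : ∫ x, f K t x = if 0 < t then ∫ u in Ioi t, K u else ∫ u in Iic t, K u := by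
      rw [show (fun x => f K t x) = (if 0 < t then Ioi t else Iic t).indicator K from
        f_eq_indicator K t]
      by_cases ht : 0 < t <;>
        simp [ht, integral_indicator, measurableSet_Ioi, measurableSet_Iic]
    rw [h1, hL t]
    by_cases ht : 0 < t <;> simp [ht] <;> ring1
  calc ∫ t, (L t) ^ 2
      = ∫ t, ∫ p : ℝ × ℝ, f K t p.1 * f K t p.2 := by
        exact integral_congr_ae (Filter.Eventually.of_forall fun t => (hOuter t).symm)
    _ = ∫ p : ℝ × ℝ, ∫ t, f K t p.1 * f K t p.2 := by
        exact (integral_integral_swap hH_int).symm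
    _ = ∫ p : ℝ × ℝ, (if 0 ≤ p.1 * p.2 then K p.1 * K p.2 * min |p.1| |p.2| else 0) :=
        integral_congr_ae (Filter.Eventually.of_forall fun p => hInner p)

end Stmt0Aux

/-- For an integrable kernel `K` with `∫ K = 1`, letting
`L t = (∫_t^∞ K) 1_{t>0} − (∫_{−∞}^t K) 1_{t≤0}`, one has
`∫ L(t)² dt = ∬_{xy ≥ 0} K(x) K(y) (|x| ⊓ |y|) dx dy`, provided both sides are finite. -/
theorem stmt_0 (K : ℝ → ℝ) (hK : Integrable K) (hK1 : ∫ u, K u = 1)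
    (L : ℝ → ℝ)
    (hL : ∀ t, L t = if 0 < t then ∫ u in Ioi t, K u else -∫ u in Iic t, K u)
    (hLint : Integrable (fun t => (L t) ^ 2))
    (hKKint : Integrable (fun p : ℝ × ℝ =>
      if 0 ≤ p.1 * p.2 then K p.1 * K p.2 * min |p.1| |p.2| else 0)) :
    ∫ t, (L t) ^ 2
      = ∫ p : ℝ × ℝ, (if 0 ≤ p.1 * p.2 then K p.1 * K p.2 * min |p.1| |p.2| else 0) := by
  -- replace K by a measurable representative
  set K' : ℝ → ℝ := hK.1.mk K with hK'def
  have hKm' : Measurable K' := hK.1.stronglyMeasurable_mk.measurable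
  have hae : K =ᵐ[volume] K' := hK.1.ae_eq_mk
  have hK' : Integrable K' := hK.congr hae
  -- the same L works for K'
  have hL' : ∀ t, L t = if 0 < t then ∫ u in Ioi t, K' u else -∫ u in Iic t, K' u := by
    intro t
    have h1 : ∫ u in Ioi t, K u = ∫ u in Ioi t, K' u :=
      integral_congr_ae (ae_restrict_of_ae hae)
    have h2 : ∫ u in Iic t, K u = ∫ u in Iic t, K' u :=
      integral_congr_ae (ae_restrict_of_ae hae)
    rw [hL t, h1, h2]
  -- the double-kernel functions agree a.e. on the product
  have hprodae : (fun p : ℝ × ℝ =>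
        if 0 ≤ p.1 * p.2 then K p.1 * K p.2 * min |p.1| |p.2| else 0)
      =ᵐ[volume] (fun p : ℝ × ℝ =>
        if 0 ≤ p.1 * p.2 then K' p.1 * K' p.2 * min |p.1| |p.2| else 0) := by
    rw [Measure.volume_eq_prod]
    have h1 : (fun p : ℝ × ℝ => K p.1) =ᵐ[(volume : Measure ℝ).prod volume]
        fun p : ℝ × ℝ => K' p.1 :=
      MeasureTheory.Measure.quasiMeasurePreserving_fst.ae_eq_comp hae
    have h2 : (fun p : ℝ × ℝ => K p.2) =ᵐ[(volume : Measure ℝ).prod volume]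
        fun p : ℝ × ℝ => K' p.2 :=
      MeasureTheory.Measure.quasiMeasurePreserving_snd.ae_eq_comp hae
    filter_upwards [h1, h2] with p hp1 hp2
    simp only [hp1, hp2]
  have hKKint' : Integrable (fun p : ℝ × ℝ =>
      if 0 ≤ p.1 * p.2 then K' p.1 * K' p.2 * min |p.1| |p.2| else 0) :=
    hKKint.congr hprodae
  rw [Stmt0Aux.aux K' hKm' hK' L hL' hKKint']
  exact (integral_congr_ae hprodae).symm
end

section
/- Let g : [0,1] → ℝ be continuous, piecewise C¹ with piecewise Lipschitz derivative and g(0) = g(1) = 0. Then φ'_k(g) := Σ_{i=1}^k (g(i/k) − g((i−1)/k))² = (1/k) ∫_0^1 g'(s)² ds + O(1/k²) as k → ∞. -/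
open Set

/-- `g` is piecewise `C¹` on `[0,1]` with derivative `g'` (off a finite partition) which is
Lipschitz on each piece: there is a finite partition `0 = p 0 < p 1 < ⋯ < p N = 1` such
that on each open piece `g` has derivative `g'` and `g'` is Lipschitz there. -/
def PiecewiseC1LipDerivWith (g g' : ℝ → ℝ) : Prop :=
  ∃ (N : ℕ) (p : ℕ → ℝ), 0 < N ∧ p 0 = 0 ∧ p N = 1 ∧
    (∀ i < N, p i < p (i + 1)) ∧
    ∀ i < N,
      (∀ x ∈ Ioo (p i) (p (i + 1)), HasDerivAt g (g' x) x) ∧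
      ∃ C : NNReal, LipschitzOnWith C g' (Ioo (p i) (p (i + 1)))

private lemma part_mono {p : ℕ → ℝ} {N : ℕ} (h : ∀ i < N, p i < p (i + 1)) :
    ∀ i j, i ≤ j → j ≤ N → p i ≤ p j := by
  intro i j hij hjN
  induction j with
  | zero => exact le_of_eq (by rw [Nat.le_zero.mp hij])
  | succ j ih =>
    rcases eq_or_lt_of_le hij with rfl | h'
    · exact le_rfl
    · exact (ih (Nat.lt_succ_iff.mp h') (le_trans (Nat.le_succ j) hjN)).trans
        (h j (Nat.lt_of_lt_of_le (Nat.lt_succ_self j) hjN)).le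

open MeasureTheory in
private lemma quad_ident {f : ℝ → ℝ} {u v c : ℝ}
    (h1 : IntervalIntegrable f volume u v)
    (h2 : IntervalIntegrable (fun x => f x ^ 2) volume u v) :
    ∫ x in u..v, (f x - c) ^ 2 =
      (∫ x in u..v, f x ^ 2) - 2 * c * (∫ x in u..v, f x) + c ^ 2 * (v - u) := by
  have e : (∫ x in u..v, (f x - c) ^ 2)
      = ∫ x in u..v, (f x ^ 2 - (2 * c) * f x + c ^ 2) := by
    congr 1; funext x; ring
  rw [e, intervalIntegral.integral_add (h2.sub (h1.const_mul (2 * c))) intervalIntegrable_const,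
    intervalIntegral.integral_sub h2 (h1.const_mul (2 * c)),
    intervalIntegral.integral_const_mul, intervalIntegral.integral_const, smul_eq_mul]
  ring

set_option maxHeartbeats 2000000 in
/-- For a continuous, piecewise `C¹` weight function `g` on `[0,1]` with
piecewise Lipschitz derivative `g'` and `g(0) = g(1) = 0`, one has
`φ'_k(g) = Σ_{i=1}^k (g(i/k) − g((i−1)/k))² = (1/k) ∫_0^1 g'(s)² ds + O(1/k²)`. -/
theorem stmt_7 (g g' : ℝ → ℝ) (hgc : ContinuousOn g (Icc 0 1))
    (hgp : PiecewiseC1LipDerivWith g g') (hg0 : g 0 = 0) (hg1 : g 1 = 0) :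
    ∃ C : ℝ, ∀ k : ℕ, 1 ≤ k →
      |(∑ i ∈ Finset.Icc 1 k,
          (g ((i : ℝ) / (k : ℝ)) - g (((i : ℝ) - 1) / (k : ℝ))) ^ 2)
        - (1 / (k : ℝ)) * ∫ s in (0 : ℝ)..1, (g' s) ^ 2| ≤ C / (k : ℝ) ^ 2 := by
  classical
  open MeasureTheory in
  obtain ⟨N, p, hN, hp0, hpN, hplt, hpieces⟩ := hgp
  have hmono := part_mono hplt
  have hpIcc : ∀ j, j ≤ N → p j ∈ Icc (0:ℝ) 1 := by
    intro j hj
    exact ⟨hp0 ▸ hmono 0 j (Nat.zero_le _) hj, hpN ▸ hmono j N hj le_rfl⟩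
  have hder : ∀ i, i < N → ∀ x ∈ Ioo (p i) (p (i+1)), HasDerivAt g (g' x) x :=
    fun i hi => (hpieces i hi).1
  have hLipEx : ∀ i, ∃ C : NNReal, i < N → LipschitzOnWith C g' (Ioo (p i) (p (i+1))) := by
    intro i
    by_cases hi : i < N
    · obtain ⟨C, hC⟩ := (hpieces i hi).2
      exact ⟨C, fun _ => hC⟩
    · exact ⟨0, fun h => absurd h hi⟩
  choose Lip hLip using hLipEx
  set L : ℝ := (((Finset.range N).sup Lip : NNReal) : ℝ) with hLdef
  have hL0 : 0 ≤ L := NNReal.coe_nonneg _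
  have hLipLe : ∀ i, i < N → (Lip i : ℝ) ≤ L :=
    fun i hi => NNReal.coe_le_coe.mpr (Finset.le_sup (Finset.mem_range.mpr hi))
  set mid : ℕ → ℝ := fun i => (p i + p (i+1)) / 2 with hmiddef
  have hmid : ∀ i, i < N → mid i ∈ Ioo (p i) (p (i+1)) := by
    intro i hi
    have := hplt i hi
    constructor <;> simp only [hmiddef] <;> linarith
  have hNne : (Finset.range N).Nonempty := Finset.nonempty_range_iff.mpr hN.ne'
  set M : ℝ := (Finset.range N).sup' hNne (fun i => |g' (mid i)| + L) with hMdef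
  have hM0 : 0 ≤ M := by
    rw [hMdef]
    refine le_trans ?_ (Finset.le_sup' (fun i => |g' (mid i)| + L) (Finset.mem_range.mpr hN))
    positivity
  have hMb : ∀ i, i < N → ∀ x ∈ Ioo (p i) (p (i+1)), |g' x| ≤ M := by
    intro i hi x hx
    have hd := (hLip i hi).dist_le_mul x hx (mid i) (hmid i hi)
    rw [Real.dist_eq, Real.dist_eq] at hd
    have hp1 : 0 ≤ p i := (hpIcc i hi.le).1
    have hp2 : p (i+1) ≤ 1 := (hpIcc (i+1) (Nat.succ_le_of_lt hi)).2
    have hdist1 : |x - mid i| ≤ 1 := by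
      have h1 := hx.1; have h2 := hx.2
      have h3 := (hmid i hi).1; have h4 := (hmid i hi).2
      rw [abs_le]; constructor <;> linarith
    have h5 : |g' x| - |g' (mid i)| ≤ |g' x - g' (mid i)| := abs_sub_abs_le_abs_sub _ _
    have h6 : (Lip i : ℝ) * |x - mid i| ≤ L * 1 :=
      mul_le_mul (hLipLe i hi) hdist1 (abs_nonneg _) hL0
    have h7 : |g' (mid i)| + L ≤ M := by
      rw [hMdef]
      exact Finset.le_sup' (fun i => |g' (mid i)| + L) (Finset.mem_range.mpr hi)
    linarith
  set S : Set ℝ := ⋃ i ∈ Finset.range N, Ioo (p i) (p (i+1)) with hSdef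
  have hSmem : ∀ x ∈ S, ∃ i, i < N ∧ x ∈ Ioo (p i) (p (i+1)) := by
    intro x hx
    simp only [hSdef, Set.mem_iUnion, Finset.mem_range, exists_prop] at hx
    exact hx
  have hSmem' : ∀ i, i < N → Ioo (p i) (p (i+1)) ⊆ S := by
    intro i hi x hx
    simp only [hSdef, Set.mem_iUnion, Finset.mem_range, exists_prop]
    exact ⟨i, hi, hx⟩
  have hSsub : S ⊆ Ioo 0 1 := by
    intro x hx
    obtain ⟨i, hi, hx⟩ := hSmem x hx
    exact ⟨lt_of_le_of_lt (hp0 ▸ hmono 0 i (Nat.zero_le _) hi.le) hx.1,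
      lt_of_lt_of_le hx.2 (hpN ▸ hmono (i+1) N hi le_rfl)⟩
  have hcov : ∀ x ∈ Ioo (0:ℝ) 1, x ∈ S ∨ ∃ j, j < N ∧ x = p j := by
    intro x hx
    set P : ℕ → Prop := fun i => p i ≤ x with hPdef
    have hP0 : P 0 := by simp only [hPdef, hp0]; exact hx.1.le
    set i := Nat.findGreatest P N with hidef
    have hiN : i ≤ N := Nat.findGreatest_le N
    have hPi : P i := by
      rcases Nat.eq_zero_or_pos i with h0 | h0
      · rw [h0]; exact hP0
      · exact Nat.findGreatest_of_ne_zero hidef.symm h0.ne'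
    have hilt : i < N := by
      rcases lt_or_eq_of_le hiN with h | h
      · exact h
      · exfalso
        rw [h] at hPi
        simp only [hPdef, hpN] at hPi
        linarith [hx.2]
    have hnot : ¬ P (i+1) :=
      Nat.findGreatest_is_greatest (Nat.lt_succ_self i) (Nat.succ_le_of_lt hilt)
    simp only [hPdef, not_le] at hnot
    rcases eq_or_lt_of_le hPi with heq | hltx
    · exact Or.inr ⟨i, hilt, heq.symm⟩
    · exact Or.inl (hSmem' i hilt ⟨hltx, hnot⟩)
  have hnull : volume (Icc (0:ℝ) 1 \ S) = 0 := by
    have hsub : Icc (0:ℝ) 1 \ S ⊆ insert (0:ℝ) (insert 1 (p '' (Iio N))) := by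
      rintro x ⟨hx1, hx2⟩
      rcases eq_or_lt_of_le hx1.1 with h0 | h0
      · simp [← h0]
      rcases eq_or_lt_of_le hx1.2 with h1 | h1
      · simp [h1]
      rcases hcov x ⟨h0, h1⟩ with h | ⟨j, hj, rfl⟩
      · exact absurd h hx2
      · simp only [Set.mem_insert_iff]
        exact Or.inr (Or.inr ⟨j, Set.mem_Iio.mpr hj, rfl⟩)
    refine measure_mono_null hsub ?_
    have hfin : (insert (0:ℝ) (insert 1 (p '' (Iio N)))).Finite :=
      (((Set.finite_Iio N).image p).insert 1).insert 0
    exact hfin.measure_zero _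
  have haeS : ∀ᵐ x ∂(volume : Measure ℝ), x ∈ Icc (0:ℝ) 1 → x ∈ S := by
    rw [MeasureTheory.ae_iff]
    refine measure_mono_null ?_ hnull
    intro x hx
    simp only [Set.mem_setOf_eq] at hx
    push_neg at hx
    exact ⟨hx.1, hx.2⟩
  have hMae : ∀ᵐ x ∂(volume : Measure ℝ), x ∈ Icc (0:ℝ) 1 → |g' x| ≤ M := by
    filter_upwards [haeS] with x hx hxI
    obtain ⟨i, hi, hmem⟩ := hSmem x (hx hxI)
    exact hMb i hi x hmem
  have haesm : AEStronglyMeasurable g' (volume.restrict (Icc (0:ℝ) 1)) := by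
    have h1 : AEStronglyMeasurable g' (volume.restrict S) := by
      rw [hSdef]
      rw [aestronglyMeasurable_iUnion_iff]
      intro i
      by_cases hi : i ∈ Finset.range N
      · simp only [hi, Set.iUnion_true]
        exact ((hLip i (Finset.mem_range.mp hi)).continuousOn).aestronglyMeasurable
          measurableSet_Ioo
      · simp only [hi, Set.iUnion_false, Measure.restrict_empty]
        exact aestronglyMeasurable_zero_measure _
    have h2 : S =ᵐ[volume] Icc (0:ℝ) 1 := by
      rw [MeasureTheory.ae_eq_set]
      constructor
      · have he : S \ Icc (0:ℝ) 1 = ∅ :=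
          Set.diff_eq_empty.mpr (hSsub.trans Set.Ioo_subset_Icc_self)
        rw [he]; simp
      · exact hnull
    rwa [Measure.restrict_congr_set h2] at h1
  have hIoc_sub : ∀ u v : ℝ, 0 ≤ u → v ≤ 1 → Ioc u v ⊆ Icc (0:ℝ) 1 := by
    intro u v hu hv x hx
    exact ⟨le_trans hu hx.1.le, le_trans hx.2 hv⟩
  have hintg : ∀ u v : ℝ, 0 ≤ u → v ≤ 1 → u ≤ v → IntervalIntegrable g' volume u v := by
    intro u v hu hv huv
    rw [intervalIntegrable_iff_integrableOn_Ioc_of_le huv]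
    have hm : AEStronglyMeasurable g' (volume.restrict (Ioc u v)) :=
      haesm.mono_measure (Measure.restrict_mono (hIoc_sub u v hu hv) le_rfl)
    refine MeasureTheory.Integrable.mono' (integrable_const M) hm ?_
    filter_upwards [MeasureTheory.ae_restrict_of_ae hMae,
      MeasureTheory.ae_restrict_mem measurableSet_Ioc] with x h1 h2
    rw [Real.norm_eq_abs]
    exact h1 (hIoc_sub u v hu hv h2)
  have hintg2 : ∀ u v : ℝ, 0 ≤ u → v ≤ 1 → u ≤ v →
      IntervalIntegrable (fun x => (g' x)^2) volume u v := by
    intro u v hu hv huv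
    rw [intervalIntegrable_iff_integrableOn_Ioc_of_le huv]
    have hm : AEStronglyMeasurable (fun x => (g' x)^2) (volume.restrict (Ioc u v)) := by
      have := (haesm.mul haesm).mono_measure
        (Measure.restrict_mono (hIoc_sub u v hu hv) le_rfl)
      simp only [sq]; exact this
    refine MeasureTheory.Integrable.mono' (integrable_const (M^2)) hm ?_
    filter_upwards [MeasureTheory.ae_restrict_of_ae hMae,
      MeasureTheory.ae_restrict_mem measurableSet_Ioc] with x h1 h2
    have hb := h1 (hIoc_sub u v hu hv h2)
    rw [Real.norm_eq_abs]
    calc |(g' x)^2| = |g' x|^2 := by rw [abs_pow]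
    _ ≤ M^2 := by exact pow_le_pow_left₀ (abs_nonneg _) hb 2
  have hFTC : ∀ u v : ℝ, 0 ≤ u → v ≤ 1 → u ≤ v → ∫ x in u..v, g' x = g v - g u := by
    intro u v hu hv huv
    refine MeasureTheory.integral_eq_of_hasDerivAt_off_countable_of_le g g' huv
      (s := p '' (Iio N)) (((Set.finite_Iio N).image p).countable)
      (hgc.mono (Icc_subset_Icc hu hv)) ?_ (hintg u v hu hv huv)
    rintro x ⟨hx1, hx2⟩
    have hx01 : x ∈ Ioo (0:ℝ) 1 := ⟨lt_of_le_of_lt hu hx1.1, lt_of_lt_of_le hx1.2 hv⟩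
    rcases hcov x hx01 with h | ⟨j, hj, rfl⟩
    · obtain ⟨i, hi, hmem⟩ := hSmem x h
      exact hder i hi x hmem
    · exact absurd (Set.mem_image_of_mem p (Set.mem_Iio.mpr hj)) hx2
  -- main part
  refine ⟨L^2 + 4 * N * M^2, ?_⟩
  intro k hk
  have hk0 : (0:ℝ) < (k:ℝ) := by exact_mod_cast hk
  set kr : ℝ := (k:ℝ) with hkr
  have hk1 : (1:ℝ) ≤ kr := by rw [hkr]; exact_mod_cast hk
  have hdivmono : ∀ x y : ℝ, x ≤ y → x/kr ≤ y/kr := by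
    intro x y h
    apply div_le_div_of_nonneg_right h hk0.le
  have huvfacts : ∀ i ∈ Finset.Icc 1 k,
      0 ≤ ((i:ℝ)-1)/kr ∧ (i:ℝ)/kr ≤ 1 ∧ ((i:ℝ)-1)/kr ≤ (i:ℝ)/kr ∧
        (i:ℝ)/kr - ((i:ℝ)-1)/kr = 1/kr := by
    intro i hi
    obtain ⟨hi1, hik⟩ := Finset.mem_Icc.mp hi
    have hi1' : (1:ℝ) ≤ (i:ℝ) := by exact_mod_cast hi1
    have hik' : (i:ℝ) ≤ kr := by rw [hkr]; exact_mod_cast hik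
    refine ⟨div_nonneg (by linarith) hk0.le, (div_le_one hk0).mpr hik',
      hdivmono _ _ (by linarith), ?_⟩
    rw [div_sub_div_same]
    norm_num
  have hsum_b : (∑ i ∈ Finset.Icc 1 k, ∫ x in (((i:ℝ)-1)/kr)..((i:ℝ)/kr), (g' x)^2)
      = ∫ s in (0:ℝ)..1, (g' s)^2 := by
    have hadj := intervalIntegral.sum_integral_adjacent_intervals
      (f := fun x => (g' x)^2) (μ := volume) (a := fun j => (j:ℝ)/kr) (n := k) ?_
    swap
    · intro j hj
      have hj' : (j:ℝ) + 1 ≤ kr := by rw [hkr]; exact_mod_cast Nat.succ_le_of_lt hj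
      have h0 : (0:ℝ) ≤ (j:ℝ)/kr := div_nonneg (Nat.cast_nonneg j) hk0.le
      have h1 : ((j+1:ℕ):ℝ)/kr ≤ 1 := by push_cast; rw [div_le_one hk0]; linarith
      have h2 : ((j:ℕ):ℝ)/kr ≤ ((j+1:ℕ):ℝ)/kr := by
        apply hdivmono; push_cast; linarith
      exact hintg2 _ _ h0 h1 h2
    have e1 : ((0:ℕ):ℝ)/kr = 0 := by simp
    have e2 : ((k:ℕ):ℝ)/kr = 1 := by rw [← hkr, div_self (ne_of_gt hk0)]
    rw [← Finset.Ico_add_one_right_eq_Icc, Finset.sum_Ico_eq_sum_range]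
    calc (∑ j ∈ Finset.range k, ∫ x in (((1+j:ℕ):ℝ)-1)/kr..((1+j:ℕ):ℝ)/kr, (g' x)^2)
        = ∑ j ∈ Finset.range k, ∫ x in ((j:ℕ):ℝ)/kr..(((j+1):ℕ):ℝ)/kr, (g' x)^2 := by
          refine Finset.sum_congr rfl ?_
          intro j hj
          have ea : (((1+j:ℕ):ℝ)-1)/kr = ((j:ℕ):ℝ)/kr := by push_cast; ring
          have eb : ((1+j:ℕ):ℝ)/kr = (((j+1):ℕ):ℝ)/kr := by push_cast; ring
          rw [ea, eb]
    _ = ∫ s in (0:ℝ)..1, (g' s)^2 := by rw [hadj, e1, e2]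
  have hneV : ∀ V : ℝ, ∀ᵐ x ∂(volume : Measure ℝ), x ≠ V := by
    intro V
    rw [MeasureTheory.ae_iff]
    have he : {x : ℝ | ¬ x ≠ V} = {V} := by ext y; simp
    rw [he]
    exact Real.volume_singleton
  set bad : ℕ → Prop := fun i => ∃ j, 0 < j ∧ j < N ∧
      p j ∈ Ioo (((i:ℝ)-1)/kr) ((i:ℝ)/kr) with hbaddef
  have hbound : ∀ i ∈ Finset.Icc 1 k,
      |(g ((i:ℝ)/kr) - g (((i:ℝ)-1)/kr))^2
          - 1/kr * ∫ x in (((i:ℝ)-1)/kr)..((i:ℝ)/kr), (g' x)^2|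
        ≤ if bad i then 4*M^2/kr^2 else L^2/kr^4 := by
    intro i hi
    obtain ⟨hU0, hV1, hUV, hVU⟩ := huvfacts i hi
    set U := ((i:ℝ)-1)/kr with hUdef
    set V := (i:ℝ)/kr with hVdef
    have h1 := hintg U V hU0 hV1 hUV
    have h2 := hintg2 U V hU0 hV1 hUV
    set a := g V - g U with hadef
    have hfa : ∫ x in U..V, g' x = a := by rw [hadef]; exact hFTC U V hU0 hV1 hUV
    set c := kr * a with hcdef
    have hkrne : kr ≠ 0 := ne_of_gt hk0
    have hbadIff : bad i ↔ ∃ j, 0 < j ∧ j < N ∧ p j ∈ Ioo U V := Iff.rfl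
    have key : ∀ B : ℝ, 0 ≤ B →
        (∀ᵐ x ∂(volume : Measure ℝ), x ∈ Ioo U V → |g' x - c| ≤ B) →
        |a^2 - 1/kr * ∫ x in U..V, (g' x)^2| ≤ B^2 / kr^2 := by
      intro B hB0 hB
      have hident := quad_ident (f := g') (c := c) h1 h2
      have hident2 : a^2 - 1/kr * (∫ x in U..V, (g' x)^2)
          = -(1/kr) * ∫ x in U..V, (g' x - c)^2 := by
        rw [hident, hfa, hVU, hcdef]
        field_simp
        ring
      have habs : |∫ x in U..V, (g' x - c)^2| ≤ B^2 * |V - U| := by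
        have hnorm := intervalIntegral.norm_integral_le_of_norm_le_const_ae
          (f := fun x => (g' x - c)^2) (a := U) (b := V) (C := B^2) ?_
        · simpa [Real.norm_eq_abs] using hnorm
        · filter_upwards [hB, hneV V] with x hx1 hx2 hx3
          rw [Set.uIoc_of_le hUV] at hx3
          have hxo : x ∈ Ioo U V := ⟨hx3.1, lt_of_le_of_ne hx3.2 hx2⟩
          have hbx := hx1 hxo
          rw [Real.norm_eq_abs, abs_of_nonneg (sq_nonneg _), ← sq_abs]
          exact pow_le_pow_left₀ (abs_nonneg _) hbx 2
      rw [hident2, abs_mul, abs_neg, abs_of_pos (one_div_pos.mpr hk0)]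
      calc 1/kr * |∫ x in U..V, (g' x - c)^2| ≤ 1/kr * (B^2 * |V - U|) :=
            mul_le_mul_of_nonneg_left habs (by positivity)
      _ = B^2/kr^2 := by
            rw [hVU, abs_of_pos (one_div_pos.mpr hk0)]
            field_simp
    by_cases hcase : ∃ j, 0 < j ∧ j < N ∧ p j ∈ Ioo U V
    · rw [if_pos (hbadIff.mpr hcase)]
      have hcM : |c| ≤ M := by
        have hInorm := intervalIntegral.norm_integral_le_of_norm_le_const_ae
          (f := g') (a := U) (b := V) (C := M) ?_
        swap
        · filter_upwards [hMae] with x hx1 hx3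
          rw [Set.uIoc_of_le hUV] at hx3
          rw [Real.norm_eq_abs]
          exact hx1 (hIoc_sub U V hU0 hV1 hx3)
        rw [Real.norm_eq_abs, hfa, hVU, abs_of_pos (one_div_pos.mpr hk0)] at hInorm
        calc |c| = kr * |a| := by rw [hcdef, abs_mul, abs_of_pos hk0]
        _ ≤ kr * (M * (1/kr)) := mul_le_mul_of_nonneg_left hInorm hk0.le
        _ = M := by field_simp
      refine le_trans (key (2*M) (by positivity) ?_) ?_
      · filter_upwards [hMae] with x hx1 hxo
        have hxI : x ∈ Icc (0:ℝ) 1 := ⟨le_trans hU0 hxo.1.le, le_trans hxo.2.le hV1⟩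
        have h8 := hx1 hxI
        calc |g' x - c| = |g' x + -c| := by rw [sub_eq_add_neg]
        _ ≤ |g' x| + |-c| := abs_add_le _ _
        _ = |g' x| + |c| := by rw [abs_neg]
        _ ≤ M + M := add_le_add h8 hcM
        _ = 2*M := by ring
      · have he : (2*M)^2/kr^2 = 4*M^2/kr^2 := by ring
        rw [he]
    · rw [if_neg (fun h => hcase (hbadIff.mp h))]
      push_neg at hcase
      have hUVlt : U < V := by
        rw [← sub_pos, hVU]
        exact one_div_pos.mpr hk0
      have hx0 : (U+V)/2 ∈ Ioo U V := ⟨by linarith, by linarith⟩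
      have hx0' : (U+V)/2 ∈ Ioo (0:ℝ) 1 :=
        ⟨lt_of_le_of_lt hU0 hx0.1, lt_of_lt_of_le hx0.2 hV1⟩
      obtain ⟨j, hj, hsubs⟩ : ∃ j, j < N ∧ Ioo U V ⊆ Ioo (p j) (p (j+1)) := by
        rcases hcov _ hx0' with h | ⟨j, hjN, heq⟩
        · obtain ⟨j, hj, hmem⟩ := hSmem _ h
          refine ⟨j, hj, ?_⟩
          intro t ht
          constructor
          · by_contra hc
            push_neg at hc
            have hpjIoo : p j ∈ Ioo U V := ⟨lt_of_lt_of_le ht.1 hc, hmem.1.trans hx0.2⟩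
            rcases Nat.eq_zero_or_pos j with rfl | hj0
            · rw [hp0] at hpjIoo
              exact absurd hpjIoo.1 (not_lt.mpr hU0)
            · exact hcase j hj0 hj hpjIoo
          · by_contra hc
            push_neg at hc
            have hpjIoo : p (j+1) ∈ Ioo U V := ⟨lt_trans hx0.1 hmem.2, lt_of_le_of_lt hc ht.2⟩
            rcases eq_or_lt_of_le (show j + 1 ≤ N from hj) with hNe | hlt
            · rw [hNe, hpN] at hpjIoo
              exact absurd hpjIoo.2 (not_lt.mpr hV1)
            · exact hcase (j+1) (Nat.succ_pos j) hlt hpjIoo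
        · exfalso
          rcases Nat.eq_zero_or_pos j with rfl | hj0
          · rw [hp0] at heq
            have := hx0.1
            rw [heq] at this
            exact absurd this (not_lt.mpr hU0)
          · exact hcase j hj0 hjN (heq ▸ hx0)
      refine le_trans (key (L/kr) (div_nonneg hL0 hk0.le) ?_) ?_
      · refine Filter.Eventually.of_forall ?_
        intro x hxo
        have hxp : x ∈ Ioo (p j) (p (j+1)) := hsubs hxo
        have hsplit : ∫ t in U..V, (g' x - g' t) = 1/kr * g' x - a := by
          rw [intervalIntegral.integral_sub intervalIntegrable_const h1,
            intervalIntegral.integral_const, hfa, smul_eq_mul, hVU]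
        have hIb : |∫ t in U..V, (g' x - g' t)| ≤ (L * (1/kr)) * |V - U| := by
          have hnorm := intervalIntegral.norm_integral_le_of_norm_le_const_ae
            (f := fun t => g' x - g' t) (a := U) (b := V) (C := L * (1/kr)) ?_
          · simpa [Real.norm_eq_abs] using hnorm
          · filter_upwards [hneV V] with t ht2 ht3
            rw [Set.uIoc_of_le hUV] at ht3
            have hto : t ∈ Ioo U V := ⟨ht3.1, lt_of_le_of_ne ht3.2 ht2⟩
            have htp : t ∈ Ioo (p j) (p (j+1)) := hsubs hto
            have hdd := (hLip j hj).dist_le_mul x hxp t htp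
            rw [Real.dist_eq, Real.dist_eq] at hdd
            have hdxt : |x - t| ≤ 1/kr := by
              have hVU' : V - U = 1/kr := hVU
              rw [abs_le]
              constructor
              · have h3 := hxo.1
                have h4 := hto.2
                linarith
              · have h3 := hxo.2
                have h4 := hto.1
                linarith
            rw [Real.norm_eq_abs]
            calc |g' x - g' t| ≤ (Lip j : ℝ) * |x - t| := hdd
            _ ≤ L * (1/kr) := mul_le_mul (hLipLe j hj) hdxt (abs_nonneg _) hL0
        have hgxc : g' x - c = kr * ∫ t in U..V, (g' x - g' t) := by
          rw [hsplit, hcdef]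
          field_simp
        rw [hgxc, abs_mul, abs_of_pos hk0]
        calc kr * |∫ t in U..V, (g' x - g' t)| ≤ kr * ((L * (1/kr)) * |V - U|) :=
              mul_le_mul_of_nonneg_left hIb hk0.le
        _ = L/kr := by
              rw [hVU, abs_of_pos (one_div_pos.mpr hk0)]
              field_simp
      · have he : (L/kr)^2/kr^2 = L^2/kr^4 := by
          rw [div_pow, div_div]
          ring_nf
        rw [he]
  -- assemble
  rw [← hsum_b, Finset.mul_sum, ← Finset.sum_sub_distrib]
  have hcard_bad : ((Finset.Icc 1 k).filter bad).card ≤ N := by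
    have hsub : (Finset.Icc 1 k).filter bad
        ⊆ (Finset.range N).image (fun j => (⌈kr * p j⌉).toNat) := by
      intro i hi
      rw [Finset.mem_filter, hbaddef] at hi
      obtain ⟨hik, j, hj0, hjN, hmem⟩ := hi
      rw [Finset.mem_image]
      refine ⟨j, Finset.mem_range.mpr hjN, ?_⟩
      have h1 : (i:ℝ) - 1 < kr * p j := by
        calc (i:ℝ)-1 = kr * (((i:ℝ)-1)/kr) := by
              rw [mul_comm, div_mul_cancel₀ _ (ne_of_gt hk0)]
        _ < kr * p j := mul_lt_mul_of_pos_left hmem.1 hk0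
      have h2 : kr * p j ≤ (i:ℝ) := by
        have h3 : kr * p j < kr * ((i:ℝ)/kr) := mul_lt_mul_of_pos_left hmem.2 hk0
        have h4 : kr * ((i:ℝ)/kr) = (i:ℝ) := by
          rw [mul_comm, div_mul_cancel₀ _ (ne_of_gt hk0)]
        linarith
      have hceil : ⌈kr * p j⌉ = (i : ℤ) := by
        rw [Int.ceil_eq_iff]
        constructor
        · push_cast
          linarith
        · push_cast
          linarith
      rw [hceil]
      simp
    refine le_trans (Finset.card_le_card hsub) (le_trans Finset.card_image_le ?_)
    rw [Finset.card_range]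
  have hcard_good : ((Finset.Icc 1 k).filter (fun i => ¬ bad i)).card ≤ k := by
    refine le_trans (Finset.card_filter_le _ _) ?_
    rw [Nat.card_Icc]
    omega
  calc |∑ i ∈ Finset.Icc 1 k, ((g ((i:ℝ)/kr) - g (((i:ℝ)-1)/kr))^2
          - 1/kr * ∫ x in (((i:ℝ)-1)/kr)..((i:ℝ)/kr), (g' x)^2)|
      ≤ ∑ i ∈ Finset.Icc 1 k, |(g ((i:ℝ)/kr) - g (((i:ℝ)-1)/kr))^2
          - 1/kr * ∫ x in (((i:ℝ)-1)/kr)..((i:ℝ)/kr), (g' x)^2| :=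
        Finset.abs_sum_le_sum_abs _ _
    _ ≤ ∑ i ∈ Finset.Icc 1 k, (if bad i then 4*M^2/kr^2 else L^2/kr^4) :=
        Finset.sum_le_sum hbound
    _ = ((Finset.Icc 1 k).filter bad).card • (4*M^2/kr^2)
        + ((Finset.Icc 1 k).filter (fun i => ¬ bad i)).card • (L^2/kr^4) := by
        rw [Finset.sum_ite, Finset.sum_const, Finset.sum_const]
    _ ≤ (N:ℝ) * (4*M^2/kr^2) + kr * (L^2/kr^4) := by
        rw [nsmul_eq_mul, nsmul_eq_mul]
        have c1 : ((((Finset.Icc 1 k).filter bad)).card : ℝ) ≤ (N:ℝ) := by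
          exact_mod_cast hcard_bad
        have c2 : ((((Finset.Icc 1 k).filter (fun i => ¬ bad i))).card : ℝ) ≤ kr := by
          rw [hkr]
          exact_mod_cast hcard_good
        have t1 : (0:ℝ) ≤ 4*M^2/kr^2 := by positivity
        have t2 : (0:ℝ) ≤ L^2/kr^4 := by positivity
        exact add_le_add (mul_le_mul_of_nonneg_right c1 t1)
          (mul_le_mul_of_nonneg_right c2 t2)
    _ ≤ (L^2 + 4*(N:ℝ)*M^2)/kr^2 := by
        have e : kr * (L^2/kr^4) = L^2/kr^3 := by
          field_simp
        have h1 : L^2/kr^3 ≤ L^2/kr^2 := by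
          rw [div_le_div_iff₀ (pow_pos hk0 3) (pow_pos hk0 2)]
          have hnn : 0 ≤ L^2 * kr^2 * (kr - 1) := by
            apply mul_nonneg
            · positivity
            · linarith
          nlinarith [hnn]
        have e2 : (L^2 + 4*(N:ℝ)*M^2)/kr^2 = L^2/kr^2 + (N:ℝ)*(4*M^2/kr^2) := by
          ring
        rw [e2]
        linarith [e ▸ h1]
end
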